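/- There exist a concurrent epistemic game structure M, a state q of M, an agent a, and a set of states P ⊆ St such that M,q ⊨ ⟨⟨{a}⟩⟩◇P, yet q does not belong to the least fixpoint of the monotone operator X ↦ P ∪ ⟨{a}⟩X. (Hence the naive fixpoint translation μZ.(φ ∨ ⟨A⟩Z) is not an upper bound for ⟨⟨A⟩⟩◇φ either.) -/

import Mathlib

/-- A concurrent epistemic game structure (iCGS). -/
structure CEGS where
  Agt : Type
  St : Type
  AP : Type
  Act : Type
  agtFin : Finite Agt
  agtNe : Nonempty Agt
  stNe : Nonempty St
  actFin : Finite Act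
  actNe : Nonempty Act
  V : AP → Set St
  d : Agt → St → Set Act
  d_ne : ∀ a q, (d a q).Nonempty
  o : St → (Agt → Act) → St
  sim : Agt → St → St → Prop
  sim_equiv : ∀ a, Equivalence (sim a)
  uniform : ∀ a q q', sim a q q' → d a q = d a q'

namespace CEGS

variable (M : CEGS)

/-- An action profile available at state `q`. -/
def Avail (q : M.St) (α : M.Agt → M.Act) : Prop := ∀ a, α a ∈ M.d a q

/-- A path: an infinite sequence of states, each next state being the outcome of
some available action profile. -/
def IsPath (lam : ℕ → M.St) : Prop :=
  ∀ i, ∃ α, M.Avail (lam i) α ∧ lam (i + 1) = M.o (lam i) α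

/-- `s` is a collective ir-strategy (uniform, memoryless) for coalition `A`. -/
def IsIrStrat (A : Set M.Agt) (s : M.Agt → M.St → M.Act) : Prop :=
  ∀ a ∈ A, (∀ q, s a q ∈ M.d a q) ∧ (∀ q q', M.sim a q q' → s a q = s a q')

/-- `s` is a collective Ir-strategy (perfect information, memoryless) for coalition `A`. -/
def IsIrStratPI (A : Set M.Agt) (s : M.Agt → M.St → M.Act) : Prop :=
  ∀ a ∈ A, ∀ q, s a q ∈ M.d a q

/-- `lam ∈ out(q, s_A)`: a path starting at `q` along which every agent of `A` plays `s`. -/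
def InOut (A : Set M.Agt) (s : M.Agt → M.St → M.Act) (q : M.St) (lam : ℕ → M.St) : Prop :=
  lam 0 = q ∧ ∀ i, ∃ α, M.Avail (lam i) α ∧ (∀ a ∈ A, α a = s a (lam i)) ∧
    lam (i + 1) = M.o (lam i) α

/-- `lam ∈ out^ir(q, s_A) = ⋃_{a∈A} ⋃_{q ∼_a q'} out(q', s_A)`. -/
def InOutIr (A : Set M.Agt) (s : M.Agt → M.St → M.Act) (q : M.St) (lam : ℕ → M.St) : Prop :=
  ∃ a ∈ A, ∃ q', M.sim a q q' ∧ M.InOut A s q' lam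

/-- The "everybody knows" relation `∼_A^E = ⋃_{a∈A} ∼_a`. -/
def simE (A : Set M.Agt) (q q' : M.St) : Prop := ∃ a ∈ A, M.sim a q q'

/-- The "common knowledge" relation `∼_A^C`: transitive closure of `∼_A^E`. -/
def simC (A : Set M.Agt) : M.St → M.St → Prop := Relation.TransGen (M.simE A)

/-- Individual knowledge: `K_a X`. -/
def Know (a : M.Agt) (X : Set M.St) : Set M.St := {q | ∀ q', M.sim a q q' → q' ∈ X}

/-- Mutual knowledge: `E_A X`. -/
def EKnow (A : Set M.Agt) (X : Set M.St) : Set M.St := {q | ∀ q', M.simE A q q' → q' ∈ X}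

/-- Common knowledge: `C_A X`. -/
def CKnow (A : Set M.Agt) (X : Set M.St) : Set M.St := {q | ∀ q', M.simC A q q' → q' ∈ X}

/-- Next-step operator `⟨A⟩X` (imperfect information). -/
def Next (A : Set M.Agt) (X : Set M.St) : Set M.St :=
  {q | ∃ s, M.IsIrStrat A s ∧ ∀ lam, M.InOutIr A s q lam → lam 1 ∈ X}

/-- `Reach_M(s_A, Q, X)`. -/
def ReachSet (A : Set M.Agt) (s : M.Agt → M.St → M.Act) (Q X : Set M.St) : Set M.St :=
  {q | q ∈ Q ∧ ∀ lam, M.InOut A s q lam → ∃ i, lam i ∈ X ∧ ∀ j < i, lam j ∈ Q}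

/-- Steadfast next-step operator `⟨A⟩•X`. -/
def NextStead (A : Set M.Agt) (X : Set M.St) : Set M.St :=
  {q | ∃ s, M.IsIrStrat A s ∧
    M.ReachSet A s {q' | M.simC A q q'} X = {q' | M.simC A q q'}}

/-- `M,q ⊨ ⟨⟨A⟩⟩◇P` (ATLir reachability, ir-strategies). -/
def CanReach (A : Set M.Agt) (P : Set M.St) (q : M.St) : Prop :=
  ∃ s, M.IsIrStrat A s ∧ ∀ lam, M.InOutIr A s q lam → ∃ i, lam i ∈ P

/-- `M,q ⊨ ⟨⟨A⟩⟩□P` (ATLir safety, ir-strategies). -/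
def CanGlobally (A : Set M.Agt) (P : Set M.St) (q : M.St) : Prop :=
  ∃ s, M.IsIrStrat A s ∧ ∀ lam, M.InOutIr A s q lam → ∀ i, lam i ∈ P

/-- `M,q ⊨ ⟨⟨A⟩⟩ S U P` (ATLir until, ir-strategies). -/
def CanUntil (A : Set M.Agt) (S P : Set M.St) (q : M.St) : Prop :=
  ∃ s, M.IsIrStrat A s ∧ ∀ lam, M.InOutIr A s q lam →
    ∃ i, lam i ∈ P ∧ ∀ j < i, lam j ∈ S

/-- Perfect-information next-step operator `N^Ir_A(X)`. -/
def NextPI (A : Set M.Agt) (X : Set M.St) : Set M.St :=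
  {q | ∃ t, M.IsIrStratPI A t ∧ ∀ lam, M.InOut A t q lam → lam 1 ∈ X}

/-- Perfect-information "globally" operator `G^Ir_A(X)`. -/
def GloballyPI (A : Set M.Agt) (X : Set M.St) : Set M.St :=
  {q | ∃ t, M.IsIrStratPI A t ∧ ∀ lam, M.InOut A t q lam → ∀ i, lam i ∈ X}

/-- Perfect-information "until" operator `U^Ir_A(Y, X)`. -/
def UntilPI (A : Set M.Agt) (Y X : Set M.St) : Set M.St :=
  {q | ∃ t, M.IsIrStratPI A t ∧ ∀ lam, M.InOut A t q lam →
    ∃ i, lam i ∈ X ∧ ∀ j < i, lam j ∈ Y}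

end CEGS

/-- Knaster–Tarski least fixpoint of a set operator. -/
def lfpSet {σ : Type} (f : Set σ → Set σ) : Set σ := sInf {X | f X ⊆ X}

/-- Knaster–Tarski greatest fixpoint of a set operator. -/
def gfpSet {σ : Type} (f : Set σ → Set σ) : Set σ := sSup {X | X ⊆ f X}


/-- Successor function for the counterexample model: 0 → 1 → 2 → 2. -/
def cexNxt : Fin 3 → Fin 3 := fun q => if q = 0 then 1 else 2

lemma cexNxt_nxt (q : Fin 3) : cexNxt (cexNxt q) = 2 := by
  fin_cases q <;> decide

/-- The counterexample iCGS. -/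
def cexM : CEGS where
  Agt := Unit
  St := Fin 3
  AP := Unit
  Act := Unit
  agtFin := inferInstance
  agtNe := inferInstance
  stNe := inferInstance
  actFin := inferInstance
  actNe := inferInstance
  V := fun _ => ∅
  d := fun _ _ => Set.univ
  d_ne := fun _ _ => ⟨(), trivial⟩
  o := fun q _ => cexNxt q
  sim := fun _ q q' => (q = 2 ↔ q' = 2)
  sim_equiv := fun _ => ⟨fun _ => Iff.rfl, fun h => h.symm, fun h h' => h.trans h'⟩
  uniform := fun _ _ _ _ => rfl

lemma cex_inout_iter {A : Set cexM.Agt} {s} {q : cexM.St} {lam}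
    (h : cexM.InOut A s q lam) : ∀ i, lam i = cexNxt^[i] q := by
  intro i
  induction i with
  | zero => exact h.1
  | succ n ih =>
    obtain ⟨α, _, _, hstep⟩ := h.2 n
    exact hstep.trans ((congrArg cexNxt ih).trans (Function.iterate_succ_apply' cexNxt n q).symm)

/-- the naive fixpoint translation `μZ.(P ∨ ⟨{a}⟩Z)` is not an upper bound
for `⟨⟨{a}⟩⟩◇P` either. -/
theorem naive_fixpoint_not_upper_bound :
    ∃ (M : CEGS) (q : M.St) (a : M.Agt) (P : Set M.St),
      M.CanReach {a} P q ∧ q ∉ lfpSet (fun X => P ∪ M.Next {a} X) := by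
  refine ⟨cexM, (0 : Fin 3), (), {(2 : Fin 3)}, ?_, ?_⟩
  · refine ⟨fun _ _ => (), fun a _ => ⟨fun _ => trivial, fun _ _ _ => rfl⟩, ?_⟩
    rintro lam ⟨a, -, q', -, hio⟩
    exact ⟨2, by rw [cex_inout_iter hio 2]; exact cexNxt_nxt q'⟩
  · intro hmem
    have hsub : lfpSet (fun X => {(2 : Fin 3)} ∪ cexM.Next {()} X) ⊆ {(2 : Fin 3)} := by
      apply sInf_le
      rintro q (rfl | ⟨s, -, hnext⟩)
      · rfl
      · by_contra hq2
        have hsim : cexM.sim () q (0 : Fin 3) := by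
          constructor
          · intro h; exact absurd h hq2
          · intro h; exact absurd h (by decide)
        have hio : cexM.InOut {()} s (0 : Fin 3) (fun i => cexNxt^[i] (0 : Fin 3)) := by
          refine ⟨rfl, fun i => ⟨fun _ => s () (cexNxt^[i] (0 : Fin 3)), fun _ => trivial,
            fun a _ => rfl, ?_⟩⟩
          show cexNxt^[i + 1] (0 : Fin 3) = cexNxt (cexNxt^[i] (0 : Fin 3))
          exact Function.iterate_succ_apply' cexNxt i 0
        have h1 := hnext (fun i => cexNxt^[i] (0 : Fin 3)) ⟨(), rfl, (0 : Fin 3), hsim, hio⟩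
        have h2 : cexNxt^[1] (0 : Fin 3) ∈ ({(2 : Fin 3)} : Set (Fin 3)) := h1
        exact absurd h2 (by decide)
    exact absurd (hsub hmem) (by decide)
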